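/- Let R_T = (V, R, T) be an embedded dense instance of rooted triplets, and let {a,b,c,d} ⊆ V be such that t = bc|a is the only triplet of R on a triple from {a,b,c,d} that is inconsistent with T. Then {a,b,c,d} is a conflict if and only if d lies in span(t), the set of leaves of the subtree of T rooted at the least common ancestor of {a,b,c}. -/

import Mathlib

/-- Rooted binary trees with leaves labelled by `V`. -/
inductive RTree (V : Type*) : Type _ where
  | leaf : V → RTree V
  | node : RTree V → RTree V → RTree V

namespace RTree

variable {V : Type*} [DecidableEq V]

/-- The list of leaf labels of a tree, from left to right. -/
def leafList : RTree V → List V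
  | .leaf x => [x]
  | .node l r => l.leafList ++ r.leafList

/-- The set of leaf labels of a tree. -/
def leaves (t : RTree V) : Finset V := t.leafList.toFinset

/-- A tree is proper when all its leaf labels are distinct. -/
def Proper (t : RTree V) : Prop := t.leafList.Nodup

/-- `Consistent T a b c` means that the rooted triplet `ab|c` is consistent
with `T`, i.e. the restriction of `T` to `{a, b, c}` is homeomorphic to the
rooted binary tree in which `a` and `b` are siblings below one child of the
root, the other child being `c`. -/
def Consistent : RTree V → V → V → V → Prop
  | .leaf _, _, _, _ => False
  | .node l r, a, b, c =>
      (a ∈ l.leaves ∧ b ∈ l.leaves ∧ c ∈ l.leaves ∧ Consistent l a b c) ∨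
      (a ∈ r.leaves ∧ b ∈ r.leaves ∧ c ∈ r.leaves ∧ Consistent r a b c) ∨
      (a ∈ l.leaves ∧ b ∈ l.leaves ∧ c ∈ r.leaves) ∨
      (a ∈ r.leaves ∧ b ∈ r.leaves ∧ c ∈ l.leaves)

end RTree

variable {V : Type*} [DecidableEq V]

/-- A dense rooted-triplet instance is encoded by a map `R` assigning to each
`3`-subset `{a, b, c}` its chosen apex: `R {a, b, c} = c` means that the
triplet `ab|c` belongs to the instance. Validity requires the apex to belong
to the `3`-set. -/
def TripletValid (R : Finset V → V) (S : Finset V) : Prop :=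
  ∀ a b c : V, a ∈ S → b ∈ S → c ∈ S → a ≠ b → a ≠ c → b ≠ c →
    R {a, b, c} ∈ ({a, b, c} : Finset V)

/-- `Realizes T R S`: every rooted triplet of the instance `R` on leaves of
`S` is consistent with the tree `T`. -/
def Realizes (T : RTree V) (R : Finset V → V) (S : Finset V) : Prop :=
  ∀ a b c : V, a ∈ S → b ∈ S → c ∈ S → a ≠ b → a ≠ c → b ≠ c →
    R {a, b, c} = c → T.Consistent a b c

/-- The instance `R` restricted to `S` is consistent: some rooted binary tree
over `S` realizes all its triplets. -/
def TripletConsistentOn (R : Finset V → V) (S : Finset V) : Prop :=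
  ∃ T : RTree V, T.Proper ∧ T.leaves = S ∧ Realizes T R S

/-- `spanOf T a b c` is the set of leaves of the subtree of `T` rooted at the
least common ancestor of `a`, `b`, `c`. -/
def RTree.spanOf : RTree V → V → V → V → Finset V
  | .leaf x, _, _, _ => {x}
  | .node l r, a, b, c =>
      if a ∈ l.leaves ∧ b ∈ l.leaves ∧ c ∈ l.leaves then l.spanOf a b c
      else if a ∈ r.leaves ∧ b ∈ r.leaves ∧ c ∈ r.leaves then r.spanOf a b c
      else (RTree.node l r).leaves

namespace RTree
variable {V : Type*} [DecidableEq V]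

lemma mem_leaves_node {l r : RTree V} {x : V} :
    x ∈ (RTree.node l r).leaves ↔ x ∈ l.leaves ∨ x ∈ r.leaves := by
  simp [leaves, leafList]

lemma proper_node {l r : RTree V} (h : (RTree.node l r).Proper) :
    l.Proper ∧ r.Proper ∧ ∀ x, x ∈ l.leaves → x ∉ r.leaves := by
  simp only [Proper, leafList, List.nodup_append] at h
  refine ⟨h.1, h.2.1, fun x hx hx' => ?_⟩
  have hx1 : x ∈ l.leafList := by simpa [leaves] using hx
  have hx2 : x ∈ r.leafList := by simpa [leaves] using hx'
  exact h.2.2 _ hx1 _ hx2 rfl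

lemma cons_symm {T : RTree V} {a b c : V} (h : T.Consistent a b c) :
    T.Consistent b a c := by
  induction T with
  | leaf x => exact h
  | node l r ihl ihr =>
    rcases h with ⟨h1,h2,h3,h4⟩|⟨h1,h2,h3,h4⟩|⟨h1,h2,h3⟩|⟨h1,h2,h3⟩
    · exact Or.inl ⟨h2,h1,h3,ihl h4⟩
    · exact Or.inr (Or.inl ⟨h2,h1,h3,ihr h4⟩)
    · exact Or.inr (Or.inr (Or.inl ⟨h2,h1,h3⟩))
    · exact Or.inr (Or.inr (Or.inr ⟨h2,h1,h3⟩))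

lemma cons_total {T : RTree V} (hP : T.Proper) {a b c : V}
    (ha : a ∈ T.leaves) (hb : b ∈ T.leaves) (hc : c ∈ T.leaves)
    (hab : a ≠ b) (hac : a ≠ c) (hbc : b ≠ c) :
    T.Consistent a b c ∨ T.Consistent a c b ∨ T.Consistent b c a := by
  induction T with
  | leaf x => simp [leaves, leafList] at ha hb; exact absurd (ha.trans hb.symm) hab
  | node l r ihl ihr =>
    obtain ⟨hpl, hpr, hdisj⟩ := proper_node hP
    rw [mem_leaves_node] at ha hb hc
    rcases ha with ha|ha <;> rcases hb with hb|hb <;> rcases hc with hc|hc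
    · rcases ihl hpl ha hb hc with h|h|h
      · exact Or.inl (Or.inl ⟨ha,hb,hc,h⟩)
      · exact Or.inr (Or.inl (Or.inl ⟨ha,hc,hb,h⟩))
      · exact Or.inr (Or.inr (Or.inl ⟨hb,hc,ha,h⟩))
    · exact Or.inl (Or.inr (Or.inr (Or.inl ⟨ha,hb,hc⟩)))
    · exact Or.inr (Or.inl (Or.inr (Or.inr (Or.inl ⟨ha,hc,hb⟩))))
    · exact Or.inr (Or.inr (Or.inr (Or.inr (Or.inr ⟨hb,hc,ha⟩))))
    · exact Or.inr (Or.inr (Or.inr (Or.inr (Or.inl ⟨hb,hc,ha⟩))))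
    · exact Or.inr (Or.inl (Or.inr (Or.inr (Or.inr ⟨ha,hc,hb⟩))))
    · exact Or.inl (Or.inr (Or.inr (Or.inr ⟨ha,hb,hc⟩)))
    · rcases ihr hpr ha hb hc with h|h|h
      · exact Or.inl (Or.inr (Or.inl ⟨ha,hb,hc,h⟩))
      · exact Or.inr (Or.inl (Or.inr (Or.inl ⟨ha,hc,hb,h⟩)))
      · exact Or.inr (Or.inr (Or.inr (Or.inl ⟨hb,hc,ha,h⟩)))

end RTree
namespace RTree
variable {V : Type*} [DecidableEq V]

lemma cons_asym1 {T : RTree V} (hP : T.Proper) {a b c : V}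
    (h1 : T.Consistent a b c) (h2 : T.Consistent a c b) : False := by
  induction T with
  | leaf x => exact h1
  | node l r ihl ihr =>
    obtain ⟨hpl, hpr, hdisj⟩ := proper_node hP
    rcases h1 with ⟨p1,p2,p3,p4⟩|⟨p1,p2,p3,p4⟩|⟨p1,p2,p3⟩|⟨p1,p2,p3⟩ <;>
    rcases h2 with ⟨q1,q2,q3,q4⟩|⟨q1,q2,q3,q4⟩|⟨q1,q2,q3⟩|⟨q1,q2,q3⟩ <;>
      first
        | exact ihl hpl p4 q4
        | exact ihr hpr p4 q4
        | exact hdisj _ p1 q1 | exact hdisj _ q1 p1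
        | exact hdisj _ p2 q3 | exact hdisj _ q3 p2
        | exact hdisj _ p3 q2 | exact hdisj _ q2 p3

lemma cons_asym2 {T : RTree V} (hP : T.Proper) {a b c : V}
    (h1 : T.Consistent a b c) (h2 : T.Consistent b c a) : False := by
  induction T with
  | leaf x => exact h1
  | node l r ihl ihr =>
    obtain ⟨hpl, hpr, hdisj⟩ := proper_node hP
    rcases h1 with ⟨p1,p2,p3,p4⟩|⟨p1,p2,p3,p4⟩|⟨p1,p2,p3⟩|⟨p1,p2,p3⟩ <;>
    rcases h2 with ⟨q1,q2,q3,q4⟩|⟨q1,q2,q3,q4⟩|⟨q1,q2,q3⟩|⟨q1,q2,q3⟩ <;>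
      first
        | exact ihl hpl p4 q4
        | exact ihr hpr p4 q4
        | exact hdisj _ p1 q3 | exact hdisj _ q3 p1
        | exact hdisj _ p2 q1 | exact hdisj _ q1 p2
        | exact hdisj _ p3 q2 | exact hdisj _ q2 p3

lemma span_subset {T : RTree V} {a b c : V} : T.spanOf a b c ⊆ T.leaves := by
  induction T with
  | leaf x => simp [spanOf, leaves, leafList]
  | node l r ihl ihr =>
    rw [spanOf]
    split_ifs with h1 h2
    · exact ihl.trans (fun x hx => mem_leaves_node.2 (Or.inl hx))
    · exact ihr.trans (fun x hx => mem_leaves_node.2 (Or.inr hx))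
    · exact fun x hx => hx

lemma mem_span {T : RTree V} {a b c : V} (ha : a ∈ T.leaves) (hb : b ∈ T.leaves)
    (hc : c ∈ T.leaves) : a ∈ T.spanOf a b c ∧ b ∈ T.spanOf a b c ∧ c ∈ T.spanOf a b c := by
  induction T with
  | leaf x =>
    simp_all [spanOf, leaves, leafList]
  | node l r ihl ihr =>
    rw [spanOf]
    split_ifs with h1 h2
    · exact ihl h1.1 h1.2.1 h1.2.2
    · exact ihr h2.1 h2.2.1 h2.2.2
    · exact ⟨ha, hb, hc⟩

lemma outside_span {T : RTree V} {a b c x y e : V}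
    (hx : x ∈ T.spanOf a b c) (hy : y ∈ T.spanOf a b c)
    (he : e ∈ T.leaves) (hes : e ∉ T.spanOf a b c) : T.Consistent x y e := by
  induction T with
  | leaf w => simp [leaves, leafList] at he; simp [spanOf, he] at hes
  | node l r ihl ihr =>
    rw [spanOf] at hx hy hes
    split_ifs at hx hy hes with h1 h2
    · rcases mem_leaves_node.1 he with he'|he'
      · exact Or.inl ⟨span_subset hx, span_subset hy, he', ihl hx hy he' hes⟩
      · exact Or.inr (Or.inr (Or.inl ⟨span_subset hx, span_subset hy, he'⟩))
    · rcases mem_leaves_node.1 he with he'|he'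
      · exact Or.inr (Or.inr (Or.inr ⟨span_subset hx, span_subset hy, he'⟩))
      · exact Or.inr (Or.inl ⟨span_subset hx, span_subset hy, he', ihr hx hy he' hes⟩)
    · exact absurd he hes

end RTree
namespace RTree
variable {V : Type*} [DecidableEq V]

lemma incompat1 {T : RTree V} (hP : T.Proper) {a b c d : V}
    (h1 : T.Consistent b c a) (h2 : T.Consistent a b d) (h3 : T.Consistent c d a) (h4 : T.Consistent c d b) : False := by
  induction T with
  | leaf x => exact h1
  | node l r ihl ihr =>
    obtain ⟨hpl, hpr, hdisj⟩ := proper_node hP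
    rcases h1 with ⟨p1,p2,p3,p4⟩|⟨p1,p2,p3,p4⟩|⟨p1,p2,p3⟩|⟨p1,p2,p3⟩ <;>
    rcases h2 with ⟨q1,q2,q3,q4⟩|⟨q1,q2,q3,q4⟩|⟨q1,q2,q3⟩|⟨q1,q2,q3⟩ <;>
    rcases h3 with ⟨r1,r2,r3,r4⟩|⟨r1,r2,r3,r4⟩|⟨r1,r2,r3⟩|⟨r1,r2,r3⟩ <;>
    rcases h4 with ⟨s1,s2,s3,s4⟩|⟨s1,s2,s3,s4⟩|⟨s1,s2,s3⟩|⟨s1,s2,s3⟩ <;>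
      first
          | exact ihl hpl p4 q4 r4 s4
          | exact ihr hpr p4 q4 r4 s4
          | exact hdisj _ p1 q2
          | exact hdisj _ p1 s3
          | exact hdisj _ q2 p1
          | exact hdisj _ q2 s3
          | exact hdisj _ s3 p1
          | exact hdisj _ s3 q2
          | exact hdisj _ p2 r1
          | exact hdisj _ p2 s1
          | exact hdisj _ r1 p2
          | exact hdisj _ r1 s1
          | exact hdisj _ s1 p2
          | exact hdisj _ s1 r1
          | exact hdisj _ p3 q1
          | exact hdisj _ p3 r3
          | exact hdisj _ q1 p3
          | exact hdisj _ q1 r3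
          | exact hdisj _ r3 p3
          | exact hdisj _ r3 q1
          | exact hdisj _ q3 r2
          | exact hdisj _ q3 s2
          | exact hdisj _ r2 q3
          | exact hdisj _ r2 s2
          | exact hdisj _ s2 q3
          | exact hdisj _ s2 r2

lemma incompat2 {T : RTree V} (hP : T.Proper) {a b c d : V}
    (h1 : T.Consistent b c a) (h2 : T.Consistent a b d) (h3 : T.Consistent a d c) (h4 : T.Consistent b d c) : False := by
  induction T with
  | leaf x => exact h1
  | node l r ihl ihr =>
    obtain ⟨hpl, hpr, hdisj⟩ := proper_node hP
    rcases h1 with ⟨p1,p2,p3,p4⟩|⟨p1,p2,p3,p4⟩|⟨p1,p2,p3⟩|⟨p1,p2,p3⟩ <;>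
    rcases h2 with ⟨q1,q2,q3,q4⟩|⟨q1,q2,q3,q4⟩|⟨q1,q2,q3⟩|⟨q1,q2,q3⟩ <;>
    rcases h3 with ⟨r1,r2,r3,r4⟩|⟨r1,r2,r3,r4⟩|⟨r1,r2,r3⟩|⟨r1,r2,r3⟩ <;>
    rcases h4 with ⟨s1,s2,s3,s4⟩|⟨s1,s2,s3,s4⟩|⟨s1,s2,s3⟩|⟨s1,s2,s3⟩ <;>
      first
          | exact ihl hpl p4 q4 r4 s4
          | exact ihr hpr p4 q4 r4 s4
          | exact hdisj _ p1 q2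
          | exact hdisj _ p1 s1
          | exact hdisj _ q2 p1
          | exact hdisj _ q2 s1
          | exact hdisj _ s1 p1
          | exact hdisj _ s1 q2
          | exact hdisj _ p2 r3
          | exact hdisj _ p2 s3
          | exact hdisj _ r3 p2
          | exact hdisj _ r3 s3
          | exact hdisj _ s3 p2
          | exact hdisj _ s3 r3
          | exact hdisj _ p3 q1
          | exact hdisj _ p3 r1
          | exact hdisj _ q1 p3
          | exact hdisj _ q1 r1
          | exact hdisj _ r1 p3
          | exact hdisj _ r1 q1
          | exact hdisj _ q3 r2
          | exact hdisj _ q3 s2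
          | exact hdisj _ r2 q3
          | exact hdisj _ r2 s2
          | exact hdisj _ s2 q3
          | exact hdisj _ s2 r2

lemma incompat3 {T : RTree V} (hP : T.Proper) {a b c d : V}
    (h1 : T.Consistent b c a) (h2 : T.Consistent a d b) (h3 : T.Consistent a d c) (h4 : T.Consistent b d c) : False := by
  induction T with
  | leaf x => exact h1
  | node l r ihl ihr =>
    obtain ⟨hpl, hpr, hdisj⟩ := proper_node hP
    rcases h1 with ⟨p1,p2,p3,p4⟩|⟨p1,p2,p3,p4⟩|⟨p1,p2,p3⟩|⟨p1,p2,p3⟩ <;>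
    rcases h2 with ⟨q1,q2,q3,q4⟩|⟨q1,q2,q3,q4⟩|⟨q1,q2,q3⟩|⟨q1,q2,q3⟩ <;>
    rcases h3 with ⟨r1,r2,r3,r4⟩|⟨r1,r2,r3,r4⟩|⟨r1,r2,r3⟩|⟨r1,r2,r3⟩ <;>
    rcases h4 with ⟨s1,s2,s3,s4⟩|⟨s1,s2,s3,s4⟩|⟨s1,s2,s3⟩|⟨s1,s2,s3⟩ <;>
      first
          | exact ihl hpl p4 q4 r4 s4
          | exact ihr hpr p4 q4 r4 s4
          | exact hdisj _ p1 q3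
          | exact hdisj _ p1 s1
          | exact hdisj _ q3 p1
          | exact hdisj _ q3 s1
          | exact hdisj _ s1 p1
          | exact hdisj _ s1 q3
          | exact hdisj _ p2 r3
          | exact hdisj _ p2 s3
          | exact hdisj _ r3 p2
          | exact hdisj _ r3 s3
          | exact hdisj _ s3 p2
          | exact hdisj _ s3 r3
          | exact hdisj _ p3 q1
          | exact hdisj _ p3 r1
          | exact hdisj _ q1 p3
          | exact hdisj _ q1 r1
          | exact hdisj _ r1 p3
          | exact hdisj _ r1 q1
          | exact hdisj _ q2 r2
          | exact hdisj _ q2 s2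
          | exact hdisj _ r2 q2
          | exact hdisj _ r2 s2
          | exact hdisj _ s2 q2
          | exact hdisj _ s2 r2

lemma incompat4 {T : RTree V} (hP : T.Proper) {a b c d : V}
    (h1 : T.Consistent b c a) (h2 : T.Consistent b d a) (h3 : T.Consistent a d c) (h4 : T.Consistent b d c) : False := by
  induction T with
  | leaf x => exact h1
  | node l r ihl ihr =>
    obtain ⟨hpl, hpr, hdisj⟩ := proper_node hP
    rcases h1 with ⟨p1,p2,p3,p4⟩|⟨p1,p2,p3,p4⟩|⟨p1,p2,p3⟩|⟨p1,p2,p3⟩ <;>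
    rcases h2 with ⟨q1,q2,q3,q4⟩|⟨q1,q2,q3,q4⟩|⟨q1,q2,q3⟩|⟨q1,q2,q3⟩ <;>
    rcases h3 with ⟨r1,r2,r3,r4⟩|⟨r1,r2,r3,r4⟩|⟨r1,r2,r3⟩|⟨r1,r2,r3⟩ <;>
    rcases h4 with ⟨s1,s2,s3,s4⟩|⟨s1,s2,s3,s4⟩|⟨s1,s2,s3⟩|⟨s1,s2,s3⟩ <;>
      first
          | exact ihl hpl p4 q4 r4 s4
          | exact ihr hpr p4 q4 r4 s4
          | exact hdisj _ p1 q1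
          | exact hdisj _ p1 s1
          | exact hdisj _ q1 p1
          | exact hdisj _ q1 s1
          | exact hdisj _ s1 p1
          | exact hdisj _ s1 q1
          | exact hdisj _ p2 r3
          | exact hdisj _ p2 s3
          | exact hdisj _ r3 p2
          | exact hdisj _ r3 s3
          | exact hdisj _ s3 p2
          | exact hdisj _ s3 r3
          | exact hdisj _ p3 q3
          | exact hdisj _ p3 r1
          | exact hdisj _ q3 p3
          | exact hdisj _ q3 r1
          | exact hdisj _ r1 p3
          | exact hdisj _ r1 q3
          | exact hdisj _ q2 r2
          | exact hdisj _ q2 s2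
          | exact hdisj _ r2 q2
          | exact hdisj _ r2 s2
          | exact hdisj _ s2 q2
          | exact hdisj _ s2 r2

end RTree
namespace RTree
variable {V : Type*} [DecidableEq V]

lemma scenarios {T : RTree V} {a b c d : V}
    (hab : a ≠ b) (hac : a ≠ c) (had : a ≠ d)
    (hbc : b ≠ c) (hbd : b ≠ d) (hcd : c ≠ d)
    (hP : T.Proper)
    (ha : a ∈ T.leaves) (hb : b ∈ T.leaves) (hc : c ∈ T.leaves) (hd : d ∈ T.leaves)
    (hinc : ¬ T.Consistent b c a) (hspan : d ∈ T.spanOf b c a) :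
    (T.Consistent a b d ∧ T.Consistent c d a ∧ T.Consistent c d b) ∨
    (T.Consistent a b d ∧ T.Consistent a d c ∧ T.Consistent b d c) ∨
    (T.Consistent a d b ∧ T.Consistent a d c ∧ T.Consistent b d c) ∨
    (T.Consistent b d a ∧ T.Consistent a d c ∧ T.Consistent b d c) ∨
    (T.Consistent a c d ∧ T.Consistent b d a ∧ T.Consistent b d c) ∨
    (T.Consistent a c d ∧ T.Consistent a d b ∧ T.Consistent c d b) ∨
    (T.Consistent a d c ∧ T.Consistent a d b ∧ T.Consistent c d b) ∨
    (T.Consistent c d a ∧ T.Consistent a d b ∧ T.Consistent c d b) := by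
  induction T with
  | leaf x =>
    simp [leaves, leafList] at ha hb
    exact absurd (ha.trans hb.symm) hab
  | node l r ihl ihr =>
    obtain ⟨hpl, hpr, hdisj⟩ := proper_node hP
    rw [spanOf] at hspan
    split_ifs at hspan with h1 h2
    · -- recurse left
      have mb : b ∈ l.leaves := h1.1
      have mc : c ∈ l.leaves := h1.2.1
      have ma : a ∈ l.leaves := h1.2.2
      have md : d ∈ l.leaves := span_subset hspan
      have hincl : ¬ l.Consistent b c a := fun h => hinc (Or.inl ⟨mb, mc, ma, h⟩)
      have L : ∀ x y z : V, x ∈ l.leaves → y ∈ l.leaves → z ∈ l.leaves →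
          l.Consistent x y z → (RTree.node l r).Consistent x y z :=
        fun _ _ _ hx hy hz h => Or.inl ⟨hx, hy, hz, h⟩
      have H := ihl hpl ma mb mc md hincl hspan
      rcases H with ⟨h1,h2,h3⟩|⟨h1,h2,h3⟩|⟨h1,h2,h3⟩|⟨h1,h2,h3⟩|⟨h1,h2,h3⟩|⟨h1,h2,h3⟩|⟨h1,h2,h3⟩|⟨h1,h2,h3⟩
      · exact Or.inl (⟨L _ _ _ ma mb md h1, L _ _ _ mc md ma h2, L _ _ _ mc md mb h3⟩)
      · exact Or.inr (Or.inl (⟨L _ _ _ ma mb md h1, L _ _ _ ma md mc h2, L _ _ _ mb md mc h3⟩))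
      · exact Or.inr (Or.inr (Or.inl (⟨L _ _ _ ma md mb h1, L _ _ _ ma md mc h2, L _ _ _ mb md mc h3⟩)))
      · exact Or.inr (Or.inr (Or.inr (Or.inl (⟨L _ _ _ mb md ma h1, L _ _ _ ma md mc h2, L _ _ _ mb md mc h3⟩))))
      · exact Or.inr (Or.inr (Or.inr (Or.inr (Or.inl (⟨L _ _ _ ma mc md h1, L _ _ _ mb md ma h2, L _ _ _ mb md mc h3⟩)))))
      · exact Or.inr (Or.inr (Or.inr (Or.inr (Or.inr (Or.inl (⟨L _ _ _ ma mc md h1, L _ _ _ ma md mb h2, L _ _ _ mc md mb h3⟩))))))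
      · exact Or.inr (Or.inr (Or.inr (Or.inr (Or.inr (Or.inr (Or.inl (⟨L _ _ _ ma md mc h1, L _ _ _ ma md mb h2, L _ _ _ mc md mb h3⟩)))))))
      · exact Or.inr (Or.inr (Or.inr (Or.inr (Or.inr (Or.inr (Or.inr (⟨L _ _ _ mc md ma h1, L _ _ _ ma md mb h2, L _ _ _ mc md mb h3⟩)))))))
    · -- recurse right
      have mb : b ∈ r.leaves := h2.1
      have mc : c ∈ r.leaves := h2.2.1
      have ma : a ∈ r.leaves := h2.2.2
      have md : d ∈ r.leaves := span_subset hspan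
      have hincl : ¬ r.Consistent b c a := fun h => hinc (Or.inr (Or.inl ⟨mb, mc, ma, h⟩))
      have L : ∀ x y z : V, x ∈ r.leaves → y ∈ r.leaves → z ∈ r.leaves →
          r.Consistent x y z → (RTree.node l r).Consistent x y z :=
        fun _ _ _ hx hy hz h => Or.inr (Or.inl ⟨hx, hy, hz, h⟩)
      have H := ihr hpr ma mb mc md hincl hspan
      rcases H with ⟨h1,h2,h3⟩|⟨h1,h2,h3⟩|⟨h1,h2,h3⟩|⟨h1,h2,h3⟩|⟨h1,h2,h3⟩|⟨h1,h2,h3⟩|⟨h1,h2,h3⟩|⟨h1,h2,h3⟩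
      · exact Or.inl (⟨L _ _ _ ma mb md h1, L _ _ _ mc md ma h2, L _ _ _ mc md mb h3⟩)
      · exact Or.inr (Or.inl (⟨L _ _ _ ma mb md h1, L _ _ _ ma md mc h2, L _ _ _ mb md mc h3⟩))
      · exact Or.inr (Or.inr (Or.inl (⟨L _ _ _ ma md mb h1, L _ _ _ ma md mc h2, L _ _ _ mb md mc h3⟩)))
      · exact Or.inr (Or.inr (Or.inr (Or.inl (⟨L _ _ _ mb md ma h1, L _ _ _ ma md mc h2, L _ _ _ mb md mc h3⟩))))
      · exact Or.inr (Or.inr (Or.inr (Or.inr (Or.inl (⟨L _ _ _ ma mc md h1, L _ _ _ mb md ma h2, L _ _ _ mb md mc h3⟩)))))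
      · exact Or.inr (Or.inr (Or.inr (Or.inr (Or.inr (Or.inl (⟨L _ _ _ ma mc md h1, L _ _ _ ma md mb h2, L _ _ _ mc md mb h3⟩))))))
      · exact Or.inr (Or.inr (Or.inr (Or.inr (Or.inr (Or.inr (Or.inl (⟨L _ _ _ ma md mc h1, L _ _ _ ma md mb h2, L _ _ _ mc md mb h3⟩)))))))
      · exact Or.inr (Or.inr (Or.inr (Or.inr (Or.inr (Or.inr (Or.inr (⟨L _ _ _ mc md ma h1, L _ _ _ ma md mb h2, L _ _ _ mc md mb h3⟩)))))))
    · -- root is the lca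
      rcases mem_leaves_node.1 ha with ha'|ha' <;>
        rcases mem_leaves_node.1 hb with hb'|hb' <;>
          rcases mem_leaves_node.1 hc with hc'|hc' <;>
            rcases mem_leaves_node.1 hd with hd'|hd'
      · exact absurd ⟨hb', hc', ha'⟩ h1
      · exact absurd ⟨hb', hc', ha'⟩ h1
      · -- a b d ∈ l, c ∈ r
        have t := cons_total hpl ha' hb' hd' hab had hbd
        have k2 : (RTree.node l r).Consistent a d c := Or.inr (Or.inr (Or.inl ⟨ha', hd', hc'⟩))
        have k3 : (RTree.node l r).Consistent b d c := Or.inr (Or.inr (Or.inl ⟨hb', hd', hc'⟩))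
        rcases t with h|h|h
        · exact Or.inr (Or.inl (⟨Or.inl ⟨ha', hb', hd', h⟩, k2, k3⟩))
        · exact Or.inr (Or.inr (Or.inl (⟨Or.inl ⟨ha', hd', hb', h⟩, k2, k3⟩)))
        · exact Or.inr (Or.inr (Or.inr (Or.inl (⟨Or.inl ⟨hb', hd', ha', h⟩, k2, k3⟩))))
      · exact Or.inl (⟨Or.inr (Or.inr (Or.inl ⟨ha', hb', hd'⟩)), Or.inr (Or.inr (Or.inr ⟨hc', hd', ha'⟩)), Or.inr (Or.inr (Or.inr ⟨hc', hd', hb'⟩))⟩)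
      · -- a c d ∈ l, b ∈ r
        have t := cons_total hpl ha' hc' hd' hac had hcd
        have k2 : (RTree.node l r).Consistent a d b := Or.inr (Or.inr (Or.inl ⟨ha', hd', hb'⟩))
        have k3 : (RTree.node l r).Consistent c d b := Or.inr (Or.inr (Or.inl ⟨hc', hd', hb'⟩))
        rcases t with h|h|h
        · exact Or.inr (Or.inr (Or.inr (Or.inr (Or.inr (Or.inl (⟨Or.inl ⟨ha', hc', hd', h⟩, k2, k3⟩))))))
        · exact Or.inr (Or.inr (Or.inr (Or.inr (Or.inr (Or.inr (Or.inl (⟨Or.inl ⟨ha', hd', hc', h⟩, k2, k3⟩)))))))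
        · exact Or.inr (Or.inr (Or.inr (Or.inr (Or.inr (Or.inr (Or.inr (⟨Or.inl ⟨hc', hd', ha', h⟩, k2, k3⟩)))))))
      · exact Or.inr (Or.inr (Or.inr (Or.inr (Or.inl (⟨Or.inr (Or.inr (Or.inl ⟨ha', hc', hd'⟩)), Or.inr (Or.inr (Or.inr ⟨hb', hd', ha'⟩)), Or.inr (Or.inr (Or.inr ⟨hb', hd', hc'⟩))⟩)))))
      · exact absurd (Or.inr (Or.inr (Or.inr ⟨hb', hc', ha'⟩))) hinc
      · exact absurd (Or.inr (Or.inr (Or.inr ⟨hb', hc', ha'⟩))) hinc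
      · exact absurd (Or.inr (Or.inr (Or.inl ⟨hb', hc', ha'⟩))) hinc
      · exact absurd (Or.inr (Or.inr (Or.inl ⟨hb', hc', ha'⟩))) hinc
      · exact Or.inr (Or.inr (Or.inr (Or.inr (Or.inl (⟨Or.inr (Or.inr (Or.inr ⟨ha', hc', hd'⟩)), Or.inr (Or.inr (Or.inl ⟨hb', hd', ha'⟩)), Or.inr (Or.inr (Or.inl ⟨hb', hd', hc'⟩))⟩)))))
      · -- a c d ∈ r, b ∈ l
        have t := cons_total hpr ha' hc' hd' hac had hcd
        have k2 : (RTree.node l r).Consistent a d b := Or.inr (Or.inr (Or.inr ⟨ha', hd', hb'⟩))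
        have k3 : (RTree.node l r).Consistent c d b := Or.inr (Or.inr (Or.inr ⟨hc', hd', hb'⟩))
        rcases t with h|h|h
        · exact Or.inr (Or.inr (Or.inr (Or.inr (Or.inr (Or.inl (⟨Or.inr (Or.inl ⟨ha', hc', hd', h⟩), k2, k3⟩))))))
        · exact Or.inr (Or.inr (Or.inr (Or.inr (Or.inr (Or.inr (Or.inl (⟨Or.inr (Or.inl ⟨ha', hd', hc', h⟩), k2, k3⟩)))))))
        · exact Or.inr (Or.inr (Or.inr (Or.inr (Or.inr (Or.inr (Or.inr (⟨Or.inr (Or.inl ⟨hc', hd', ha', h⟩), k2, k3⟩)))))))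
      · exact Or.inl (⟨Or.inr (Or.inr (Or.inr ⟨ha', hb', hd'⟩)), Or.inr (Or.inr (Or.inl ⟨hc', hd', ha'⟩)), Or.inr (Or.inr (Or.inl ⟨hc', hd', hb'⟩))⟩)
      · -- a b d ∈ r, c ∈ l
        have t := cons_total hpr ha' hb' hd' hab had hbd
        have k2 : (RTree.node l r).Consistent a d c := Or.inr (Or.inr (Or.inr ⟨ha', hd', hc'⟩))
        have k3 : (RTree.node l r).Consistent b d c := Or.inr (Or.inr (Or.inr ⟨hb', hd', hc'⟩))
        rcases t with h|h|h
        · exact Or.inr (Or.inl (⟨Or.inr (Or.inl ⟨ha', hb', hd', h⟩), k2, k3⟩))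
        · exact Or.inr (Or.inr (Or.inl (⟨Or.inr (Or.inl ⟨ha', hd', hb', h⟩), k2, k3⟩)))
        · exact Or.inr (Or.inr (Or.inr (Or.inl (⟨Or.inr (Or.inl ⟨hb', hd', ha', h⟩), k2, k3⟩))))
      · exact absurd ⟨hb', hc', ha'⟩ h2
      · exact absurd ⟨hb', hc', ha'⟩ h2

end RTree
section TripleSets
variable {V : Type*} [DecidableEq V]

lemma triple_swap12 (x y z : V) : ({y,x,z} : Finset V) = {x,y,z} := by
  ext t; simp; tauto

lemma triple_swap23 (x y z : V) : ({x,z,y} : Finset V) = {x,y,z} := by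
  ext t; simp; tauto

lemma triple_rot (x y z : V) : ({y,z,x} : Finset V) = {x,y,z} := by
  ext t; simp; tauto

lemma triple_rot2 (x y z : V) : ({z,x,y} : Finset V) = {x,y,z} := by
  ext t; simp; tauto

lemma triple_rev (x y z : V) : ({z,y,x} : Finset V) = {x,y,z} := by
  ext t; simp; tauto

lemma mkperm (R : Finset V → V) (x y z w : V) (h : R {x,y,z} = w) :
    R {y,x,z} = w ∧ R {x,z,y} = w ∧ R {y,z,x} = w ∧ R {z,x,y} = w ∧ R {z,y,x} = w := by
  refine ⟨?_, ?_, ?_, ?_, ?_⟩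
  · rw [triple_swap12]; exact h
  · rw [triple_swap23]; exact h
  · rw [triple_rot]; exact h
  · rw [triple_rot2]; exact h
  · rw [triple_rev]; exact h

end TripleSets

set_option maxHeartbeats 1000000

/-- Let `R_T` be an embedded dense instance and `{a, b, c, d}` a set of four
leaves such that `t = bc|a` is the only triplet of `R` on a triple from
`{a, b, c, d}` inconsistent with `T`. Then `{a, b, c, d}` is a conflict if
and only if `d` lies in `span(t)`. -/
theorem conflict_iff_mem_span [Fintype V]
    (R : Finset V → V) (hval : TripletValid R Finset.univ)
    (T : RTree V) (hP : T.Proper) (hL : T.leaves = Finset.univ)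
    (a b c d : V) (hab : a ≠ b) (hac : a ≠ c) (had : a ≠ d)
    (hbc : b ≠ c) (hbd : b ≠ d) (hcd : c ≠ d)
    (ht : R {a, b, c} = a)
    (hinc : ¬ T.Consistent b c a)
    (hothers : ∀ x y z : V, x ∈ ({a, b, c, d} : Finset V) →
      y ∈ ({a, b, c, d} : Finset V) → z ∈ ({a, b, c, d} : Finset V) →
      x ≠ y → x ≠ z → y ≠ z → ({x, y, z} : Finset V) ≠ {a, b, c} →
      R {x, y, z} = z → T.Consistent x y z) :
    ¬ TripletConsistentOn R {a, b, c, d} ↔ d ∈ T.spanOf b c a := by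
  have hba := hab.symm; have hca := hac.symm; have hda := had.symm
  have hcb := hbc.symm; have hdb := hbd.symm; have hdc := hcd.symm
  have mQ : ∀ x : V, (x = a ∨ x = b ∨ x = c ∨ x = d) → x ∈ ({a,b,c,d} : Finset V) := by
    intro x hx; simp only [Finset.mem_insert, Finset.mem_singleton]; tauto
  have mQa := mQ a (Or.inl rfl)
  have mQb := mQ b (Or.inr (Or.inl rfl))
  have mQc := mQ c (Or.inr (Or.inr (Or.inl rfl)))
  have mQd := mQ d (Or.inr (Or.inr (Or.inr rfl)))
  have mTa : a ∈ T.leaves := by rw [hL]; exact Finset.mem_univ a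
  have mTb : b ∈ T.leaves := by rw [hL]; exact Finset.mem_univ b
  have mTc : c ∈ T.leaves := by rw [hL]; exact Finset.mem_univ c
  have mTd : d ∈ T.leaves := by rw [hL]; exact Finset.mem_univ d
  have pin : ∀ x y z : V, x ∈ ({a,b,c,d} : Finset V) → y ∈ ({a,b,c,d} : Finset V) →
      z ∈ ({a,b,c,d} : Finset V) → x ≠ y → x ≠ z → y ≠ z →
      d ∈ ({x,y,z} : Finset V) → T.Consistent x y z → R {x,y,z} = z := by
    intro x y z hx hy hz hxy hxz hyz hdin hC
    have hv := hval x y z (Finset.mem_univ x) (Finset.mem_univ y) (Finset.mem_univ z) hxy hxz hyz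
    rcases Finset.mem_insert.1 hv with h|h
    · exfalso
      have e : ({y,z,x} : Finset V) = {x,y,z} := triple_rot x y z
      have hne : ({y,z,x} : Finset V) ≠ {a,b,c} := by
        rw [e]; intro hq; rw [hq] at hdin
        simp only [Finset.mem_insert, Finset.mem_singleton] at hdin
        rcases hdin with h'|h'|h'
        exacts [hda h', hdb h', hdc h']
      have hC2 := hothers y z x hy hz hx hyz hxy.symm hxz.symm hne (by rw [e]; exact h)
      exact RTree.cons_asym2 hP hC hC2
    rcases Finset.mem_insert.1 h with h|h
    · exfalso
      have e : ({x,z,y} : Finset V) = {x,y,z} := triple_swap23 x y z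
      have hne : ({x,z,y} : Finset V) ≠ {a,b,c} := by
        rw [e]; intro hq; rw [hq] at hdin
        simp only [Finset.mem_insert, Finset.mem_singleton] at hdin
        rcases hdin with h'|h'|h'
        exacts [hda h', hdb h', hdc h']
      have hC2 := hothers x z y hx hz hy hxz hxy hyz.symm hne (by rw [e]; exact h)
      exact RTree.cons_asym1 hP hC hC2
    · exact Finset.mem_singleton.1 h
  constructor
  · -- ¬ consistent → d ∈ span ; by contraposition
    intro hncon
    by_contra hspan
    apply hncon
    obtain ⟨mSb, mSc, mSa⟩ := RTree.mem_span (T := T) mTb mTc mTa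
    have Cabd : T.Consistent a b d := RTree.outside_span mSa mSb mTd hspan
    have Cacd : T.Consistent a c d := RTree.outside_span mSa mSc mTd hspan
    have Cbcd : T.Consistent b c d := RTree.outside_span mSb mSc mTd hspan
    have Rabd : R {a,b,d} = d := pin a b d mQa mQb mQd hab had hbd (by simp) Cabd
    have Racd : R {a,c,d} = d := pin a c d mQa mQc mQd hac had hcd (by simp) Cacd
    have Rbcd : R {b,c,d} = d := pin b c d mQb mQc mQd hbc hbd hcd (by simp) Cbcd
    obtain ⟨t2,t3,t4,t5,t6⟩ := mkperm R a b c a ht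
    obtain ⟨u2,u3,u4,u5,u6⟩ := mkperm R a b d d Rabd
    obtain ⟨v2,v3,v4,v5,v6⟩ := mkperm R a c d d Racd
    obtain ⟨w2,w3,w4,w5,w6⟩ := mkperm R b c d d Rbcd
    refine ⟨RTree.node (RTree.node (RTree.node (RTree.leaf b) (RTree.leaf c)) (RTree.leaf a))
      (RTree.leaf d), ?_, ?_, ?_⟩
    · simp [RTree.Proper, RTree.leafList, List.nodup_cons, hba, hbc, hbd, hca, hcd, had.symm]
      tauto
    · ext x; simp [RTree.leaves, RTree.leafList]; tauto
    · intro x y z hx hy hz hxy hxz hyz hR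
      have g1 : (RTree.node (RTree.node (RTree.node (RTree.leaf b) (RTree.leaf c)) (RTree.leaf a)) (RTree.leaf d)).Consistent b c a := by
        simp [RTree.Consistent, RTree.leaves, RTree.leafList]
      have g2 : (RTree.node (RTree.node (RTree.node (RTree.leaf b) (RTree.leaf c)) (RTree.leaf a)) (RTree.leaf d)).Consistent c b a := by
        simp [RTree.Consistent, RTree.leaves, RTree.leafList]
      have g3 : (RTree.node (RTree.node (RTree.node (RTree.leaf b) (RTree.leaf c)) (RTree.leaf a)) (RTree.leaf d)).Consistent a b d := by
        simp [RTree.Consistent, RTree.leaves, RTree.leafList]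
      have g4 : (RTree.node (RTree.node (RTree.node (RTree.leaf b) (RTree.leaf c)) (RTree.leaf a)) (RTree.leaf d)).Consistent b a d := by
        simp [RTree.Consistent, RTree.leaves, RTree.leafList]
      have g5 : (RTree.node (RTree.node (RTree.node (RTree.leaf b) (RTree.leaf c)) (RTree.leaf a)) (RTree.leaf d)).Consistent a c d := by
        simp [RTree.Consistent, RTree.leaves, RTree.leafList]
      have g6 : (RTree.node (RTree.node (RTree.node (RTree.leaf b) (RTree.leaf c)) (RTree.leaf a)) (RTree.leaf d)).Consistent c a d := by
        simp [RTree.Consistent, RTree.leaves, RTree.leafList]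
      have g7 : (RTree.node (RTree.node (RTree.node (RTree.leaf b) (RTree.leaf c)) (RTree.leaf a)) (RTree.leaf d)).Consistent b c d := by
        simp [RTree.Consistent, RTree.leaves, RTree.leafList]
      have g8 : (RTree.node (RTree.node (RTree.node (RTree.leaf b) (RTree.leaf c)) (RTree.leaf a)) (RTree.leaf d)).Consistent c b d := by
        simp [RTree.Consistent, RTree.leaves, RTree.leafList]
      simp only [Finset.mem_insert, Finset.mem_singleton] at hx hy hz
      rcases hx with rfl|rfl|rfl|rfl <;> rcases hy with rfl|rfl|rfl|rfl <;>
        rcases hz with rfl|rfl|rfl|rfl <;>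
        first
          | exact absurd rfl hxy
          | exact absurd rfl hxz
          | exact absurd rfl hyz
          | exact g1
          | exact g2
          | exact g3
          | exact g4
          | exact g5
          | exact g6
          | exact g7
          | exact g8
          | exact absurd (ht.symm.trans hR) hab
          | exact absurd (ht.symm.trans hR) hac
          | exact absurd (ht.symm.trans hR) hda
          | exact absurd (ht.symm.trans hR) hdb
          | exact absurd (ht.symm.trans hR) hdc
          | exact absurd (t2.symm.trans hR) hab
          | exact absurd (t2.symm.trans hR) hac
          | exact absurd (t2.symm.trans hR) hda
          | exact absurd (t2.symm.trans hR) hdb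
          | exact absurd (t2.symm.trans hR) hdc
          | exact absurd (t3.symm.trans hR) hab
          | exact absurd (t3.symm.trans hR) hac
          | exact absurd (t3.symm.trans hR) hda
          | exact absurd (t3.symm.trans hR) hdb
          | exact absurd (t3.symm.trans hR) hdc
          | exact absurd (t4.symm.trans hR) hab
          | exact absurd (t4.symm.trans hR) hac
          | exact absurd (t4.symm.trans hR) hda
          | exact absurd (t4.symm.trans hR) hdb
          | exact absurd (t4.symm.trans hR) hdc
          | exact absurd (t5.symm.trans hR) hab
          | exact absurd (t5.symm.trans hR) hac
          | exact absurd (t5.symm.trans hR) hda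
          | exact absurd (t5.symm.trans hR) hdb
          | exact absurd (t5.symm.trans hR) hdc
          | exact absurd (t6.symm.trans hR) hab
          | exact absurd (t6.symm.trans hR) hac
          | exact absurd (t6.symm.trans hR) hda
          | exact absurd (t6.symm.trans hR) hdb
          | exact absurd (t6.symm.trans hR) hdc
          | exact absurd (u2.symm.trans hR) hab
          | exact absurd (u2.symm.trans hR) hac
          | exact absurd (u2.symm.trans hR) hda
          | exact absurd (u2.symm.trans hR) hdb
          | exact absurd (u2.symm.trans hR) hdc
          | exact absurd (u3.symm.trans hR) hab
          | exact absurd (u3.symm.trans hR) hac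
          | exact absurd (u3.symm.trans hR) hda
          | exact absurd (u3.symm.trans hR) hdb
          | exact absurd (u3.symm.trans hR) hdc
          | exact absurd (u4.symm.trans hR) hab
          | exact absurd (u4.symm.trans hR) hac
          | exact absurd (u4.symm.trans hR) hda
          | exact absurd (u4.symm.trans hR) hdb
          | exact absurd (u4.symm.trans hR) hdc
          | exact absurd (u5.symm.trans hR) hab
          | exact absurd (u5.symm.trans hR) hac
          | exact absurd (u5.symm.trans hR) hda
          | exact absurd (u5.symm.trans hR) hdb
          | exact absurd (u5.symm.trans hR) hdc
          | exact absurd (u6.symm.trans hR) hab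
          | exact absurd (u6.symm.trans hR) hac
          | exact absurd (u6.symm.trans hR) hda
          | exact absurd (u6.symm.trans hR) hdb
          | exact absurd (u6.symm.trans hR) hdc
          | exact absurd (Rabd.symm.trans hR) hab
          | exact absurd (Rabd.symm.trans hR) hac
          | exact absurd (Rabd.symm.trans hR) hda
          | exact absurd (Rabd.symm.trans hR) hdb
          | exact absurd (Rabd.symm.trans hR) hdc
          | exact absurd (v2.symm.trans hR) hab
          | exact absurd (v2.symm.trans hR) hac
          | exact absurd (v2.symm.trans hR) hda
          | exact absurd (v2.symm.trans hR) hdb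
          | exact absurd (v2.symm.trans hR) hdc
          | exact absurd (v3.symm.trans hR) hab
          | exact absurd (v3.symm.trans hR) hac
          | exact absurd (v3.symm.trans hR) hda
          | exact absurd (v3.symm.trans hR) hdb
          | exact absurd (v3.symm.trans hR) hdc
          | exact absurd (v4.symm.trans hR) hab
          | exact absurd (v4.symm.trans hR) hac
          | exact absurd (v4.symm.trans hR) hda
          | exact absurd (v4.symm.trans hR) hdb
          | exact absurd (v4.symm.trans hR) hdc
          | exact absurd (v5.symm.trans hR) hab
          | exact absurd (v5.symm.trans hR) hac
          | exact absurd (v5.symm.trans hR) hda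
          | exact absurd (v5.symm.trans hR) hdb
          | exact absurd (v5.symm.trans hR) hdc
          | exact absurd (v6.symm.trans hR) hab
          | exact absurd (v6.symm.trans hR) hac
          | exact absurd (v6.symm.trans hR) hda
          | exact absurd (v6.symm.trans hR) hdb
          | exact absurd (v6.symm.trans hR) hdc
          | exact absurd (Racd.symm.trans hR) hab
          | exact absurd (Racd.symm.trans hR) hac
          | exact absurd (Racd.symm.trans hR) hda
          | exact absurd (Racd.symm.trans hR) hdb
          | exact absurd (Racd.symm.trans hR) hdc
          | exact absurd (w2.symm.trans hR) hab
          | exact absurd (w2.symm.trans hR) hac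
          | exact absurd (w2.symm.trans hR) hda
          | exact absurd (w2.symm.trans hR) hdb
          | exact absurd (w2.symm.trans hR) hdc
          | exact absurd (w3.symm.trans hR) hab
          | exact absurd (w3.symm.trans hR) hac
          | exact absurd (w3.symm.trans hR) hda
          | exact absurd (w3.symm.trans hR) hdb
          | exact absurd (w3.symm.trans hR) hdc
          | exact absurd (w4.symm.trans hR) hab
          | exact absurd (w4.symm.trans hR) hac
          | exact absurd (w4.symm.trans hR) hda
          | exact absurd (w4.symm.trans hR) hdb
          | exact absurd (w4.symm.trans hR) hdc
          | exact absurd (w5.symm.trans hR) hab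
          | exact absurd (w5.symm.trans hR) hac
          | exact absurd (w5.symm.trans hR) hda
          | exact absurd (w5.symm.trans hR) hdb
          | exact absurd (w5.symm.trans hR) hdc
          | exact absurd (w6.symm.trans hR) hab
          | exact absurd (w6.symm.trans hR) hac
          | exact absurd (w6.symm.trans hR) hda
          | exact absurd (w6.symm.trans hR) hdb
          | exact absurd (w6.symm.trans hR) hdc
          | exact absurd (Rbcd.symm.trans hR) hab
          | exact absurd (Rbcd.symm.trans hR) hac
          | exact absurd (Rbcd.symm.trans hR) hda
          | exact absurd (Rbcd.symm.trans hR) hdb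
          | exact absurd (Rbcd.symm.trans hR) hdc
  · -- d ∈ span → conflict
    rintro hspan ⟨T', hP', hL', hreal⟩
    have hC' : T'.Consistent b c a := by
      apply hreal b c a mQb mQc mQa hbc hba hca
      rw [triple_rot a b c]
      exact ht
    have lift' : ∀ x y z : V, x ∈ ({a,b,c,d} : Finset V) → y ∈ ({a,b,c,d} : Finset V) →
        z ∈ ({a,b,c,d} : Finset V) → x ≠ y → x ≠ z → y ≠ z →
        d ∈ ({x,y,z} : Finset V) → T.Consistent x y z → T'.Consistent x y z := by
      intro x y z hx hy hz h1 h2 h3 hdin hC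
      exact hreal x y z hx hy hz h1 h2 h3 (pin x y z hx hy hz h1 h2 h3 hdin hC)
    rcases RTree.scenarios hab hac had hbc hbd hcd hP mTa mTb mTc mTd hinc hspan with
      ⟨s1,s2,s3⟩|⟨s1,s2,s3⟩|⟨s1,s2,s3⟩|⟨s1,s2,s3⟩|⟨s1,s2,s3⟩|⟨s1,s2,s3⟩|⟨s1,s2,s3⟩|⟨s1,s2,s3⟩
    · exact RTree.incompat1 hP' hC'
        (lift' a b d mQa mQb mQd hab had hbd (by simp) s1)
        (lift' c d a mQc mQd mQa hcd hca hda (by simp) s2)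
        (lift' c d b mQc mQd mQb hcd hcb hdb (by simp) s3)
    · exact RTree.incompat2 hP' hC'
        (lift' a b d mQa mQb mQd hab had hbd (by simp) s1)
        (lift' a d c mQa mQd mQc had hac hdc (by simp) s2)
        (lift' b d c mQb mQd mQc hbd hbc hdc (by simp) s3)
    · exact RTree.incompat3 hP' hC'
        (lift' a d b mQa mQd mQb had hab hdb (by simp) s1)
        (lift' a d c mQa mQd mQc had hac hdc (by simp) s2)
        (lift' b d c mQb mQd mQc hbd hbc hdc (by simp) s3)
    · exact RTree.incompat4 hP' hC'
        (lift' b d a mQb mQd mQa hbd hba hda (by simp) s1)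
        (lift' a d c mQa mQd mQc had hac hdc (by simp) s2)
        (lift' b d c mQb mQd mQc hbd hbc hdc (by simp) s3)
    · exact RTree.incompat1 hP' (RTree.cons_symm hC')
        (lift' a c d mQa mQc mQd hac had hcd (by simp) s1)
        (lift' b d a mQb mQd mQa hbd hba hda (by simp) s2)
        (lift' b d c mQb mQd mQc hbd hbc hdc (by simp) s3)
    · exact RTree.incompat2 hP' (RTree.cons_symm hC')
        (lift' a c d mQa mQc mQd hac had hcd (by simp) s1)
        (lift' a d b mQa mQd mQb had hab hdb (by simp) s2)
        (lift' c d b mQc mQd mQb hcd hcb hdb (by simp) s3)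
    · exact RTree.incompat3 hP' (RTree.cons_symm hC')
        (lift' a d c mQa mQd mQc had hac hdc (by simp) s1)
        (lift' a d b mQa mQd mQb had hab hdb (by simp) s2)
        (lift' c d b mQc mQd mQb hcd hcb hdb (by simp) s3)
    · exact RTree.incompat4 hP' (RTree.cons_symm hC')
        (lift' c d a mQc mQd mQa hcd hca hda (by simp) s1)
        (lift' a d b mQa mQd mQb had hab hdb (by simp) s2)
        (lift' c d b mQc mQd mQb hcd hcb hdb (by simp) s3)
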